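/- For all θ, θ' ∈ (0, π/2), |cos(θ') − cos(θ)| ≥ (1/π)·|θ² − θ'²|. -/

import Mathlib

lemma cos_sub_cos_ge_aux (θ θ' : ℝ) (hθ : θ ∈ Set.Ioo 0 (Real.pi / 2))
    (hθ' : θ' ∈ Set.Ioo 0 (Real.pi / 2)) (h : θ ≤ θ') :
    Real.cos θ - Real.cos θ' ≥ (1 / Real.pi) * (θ' ^ 2 - θ ^ 2) := by
  have hπ : (0:ℝ) < Real.pi := Real.pi_pos
  have hint : ∫ t in θ..θ', (2 / Real.pi) * t ≤ ∫ t in θ..θ', Real.sin t := by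
    apply intervalIntegral.integral_mono_on h
    · exact (continuous_const.mul continuous_id).intervalIntegrable _ _
    · exact Real.continuous_sin.intervalIntegrable _ _
    · intro t ht
      exact Real.mul_le_sin (le_trans hθ.1.le ht.1) (le_trans ht.2 hθ'.2.le)
  rw [integral_sin, intervalIntegral.integral_const_mul,
    integral_id] at hint
  have : 2 / Real.pi * (θ' ^ 2 / 2 - θ ^ 2 / 2) = 1 / Real.pi * (θ' ^ 2 - θ ^ 2) := by
    field_simp
  linarith [hint, this.symm.le]

theorem abs_cos_sub_cos_ge (θ θ' : ℝ) (hθ : θ ∈ Set.Ioo 0 (Real.pi / 2))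
    (hθ' : θ' ∈ Set.Ioo 0 (Real.pi / 2)) :
    |Real.cos θ' - Real.cos θ| ≥ (1 / Real.pi) * |θ ^ 2 - θ' ^ 2| := by
  have hπ : (0:ℝ) < Real.pi := Real.pi_pos
  rcases le_total θ θ' with h | h
  · have key := cos_sub_cos_ge_aux θ θ' hθ hθ' h
    have h2 : θ ^ 2 ≤ θ' ^ 2 := by nlinarith [hθ.1, hθ'.1]
    have h0 : (0:ℝ) ≤ 1 / Real.pi * (θ' ^ 2 - θ ^ 2) := mul_nonneg (by positivity) (by linarith)
    rw [abs_sub_comm, abs_of_nonneg (by linarith), abs_sub_comm,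
      abs_of_nonneg (by linarith)]
    linarith
  · have key := cos_sub_cos_ge_aux θ' θ hθ' hθ h
    have h2 : θ' ^ 2 ≤ θ ^ 2 := by nlinarith [hθ.1, hθ'.1]
    have h0 : (0:ℝ) ≤ 1 / Real.pi * (θ ^ 2 - θ' ^ 2) := mul_nonneg (by positivity) (by linarith)
    rw [abs_of_nonneg (by linarith), abs_of_nonneg (by linarith)]
    linarith
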